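/- Suppose the estimators satisfy stability (B1) and reduction (B2) with a function S continuous at (0,0), S(0,0)=0, and bounded on compact sets, and suppose a-priori convergence holds: ‖u_∞ − u_ℓ‖ → 0 and ‖z_∞ − z_ℓ‖ → 0. Then the error estimator is uniformly bounded: sup_ℓ ξ_ℓ < ∞. -/
import Mathlib


/-- Uniform estimator boundedness: under stability (B1), reduction (B2) with a function `S`
continuous at `(0,0)` with `S(0,0)=0` and bounded on compact sets, and a-priori convergence
of the discrete solutions, the global error estimator is uniformly bounded. -/
theorem stmt_9 {α : Type*} [DecidableEq α] {X : Type*} [NormedAddCommGroup X]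
    (T : ℕ → Finset α) (ξ : ℕ → α → ℝ) (u z : ℕ → X) (uinf zinf : X)
    (S : ℝ → ℝ → ℝ) (q : ℝ) (hq0 : 0 < q) (hq1 : q < 1)
    (hξ : ∀ ℓ t, 0 ≤ ξ ℓ t)
    (hScont : ContinuousAt (fun p : ℝ × ℝ => S p.1 p.2) (0, 0))
    (hS0 : S 0 0 = 0)
    (hSnonneg : ∀ x y, 0 ≤ S x y)
    (hSbdd : ∀ K : Set (ℝ × ℝ), IsCompact K → ∃ C, ∀ p ∈ K, S p.1 p.2 ≤ C)
    (hstab : ∀ k ℓ, k ≤ ℓ →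
      Real.sqrt (∑ t ∈ T ℓ ∩ T k, ξ ℓ t ^ 2) ≤
        Real.sqrt (∑ t ∈ T ℓ ∩ T k, ξ k t ^ 2) + S ‖u ℓ - u k‖ ‖z ℓ - z k‖)
    (hred : ∀ k ℓ, k ≤ ℓ →
      ∑ t ∈ T ℓ \ T k, ξ ℓ t ^ 2 ≤
        q * ∑ t ∈ T k \ T ℓ, ξ k t ^ 2 + (S ‖u ℓ - u k‖ ‖z ℓ - z k‖) ^ 2)
    (hu : Filter.Tendsto u Filter.atTop (nhds uinf))
    (hz : Filter.Tendsto z Filter.atTop (nhds zinf)) :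
    ∃ C, ∀ ℓ, Real.sqrt (∑ t ∈ T ℓ, ξ ℓ t ^ 2) ≤ C := by
  -- bound the norms ‖u ℓ - u 0‖ and ‖z ℓ - z 0‖
  have hu' : Filter.Tendsto (fun ℓ => ‖u ℓ - u 0‖) Filter.atTop (nhds ‖uinf - u 0‖) :=
    ((continuous_norm.comp (continuous_id.sub continuous_const)).continuousAt).tendsto.comp hu
  have hz' : Filter.Tendsto (fun ℓ => ‖z ℓ - z 0‖) Filter.atTop (nhds ‖zinf - z 0‖) :=
    ((continuous_norm.comp (continuous_id.sub continuous_const)).continuousAt).tendsto.comp hz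
  obtain ⟨A, hA⟩ := hu'.bddAbove_range
  obtain ⟨B, hB⟩ := hz'.bddAbove_range
  have hA' : ∀ ℓ, ‖u ℓ - u 0‖ ≤ A := fun ℓ => hA (Set.mem_range_self ℓ)
  have hB' : ∀ ℓ, ‖z ℓ - z 0‖ ≤ B := fun ℓ => hB (Set.mem_range_self ℓ)
  -- get a bound on S over the compact box
  obtain ⟨C0, hC0⟩ := hSbdd (Set.Icc 0 A ×ˢ Set.Icc 0 B)
    ((isCompact_Icc).prod isCompact_Icc)
  have hSle : ∀ ℓ, S ‖u ℓ - u 0‖ ‖z ℓ - z 0‖ ≤ C0 := by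
    intro ℓ
    exact hC0 (‖u ℓ - u 0‖, ‖z ℓ - z 0‖)
      ⟨⟨norm_nonneg _, hA' ℓ⟩, ⟨norm_nonneg _, hB' ℓ⟩⟩
  have hC0nn : 0 ≤ C0 := le_trans (hSnonneg _ _) (hSle 0)
  set E0 : ℝ := ∑ t ∈ T 0, ξ 0 t ^ 2 with hE0
  have hE0nn : 0 ≤ E0 := Finset.sum_nonneg fun t _ => sq_nonneg _
  set M : ℝ := (Real.sqrt E0 + C0) ^ 2 + (E0 + C0 ^ 2) with hM
  refine ⟨Real.sqrt M, fun ℓ => ?_⟩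
  have hsum_nn : ∀ (m : ℕ) (s : Finset α), 0 ≤ ∑ t ∈ s, ξ m t ^ 2 :=
    fun m s => Finset.sum_nonneg fun t _ => sq_nonneg _
  have hsplit : ∑ t ∈ T ℓ ∩ T 0, ξ ℓ t ^ 2 + ∑ t ∈ T ℓ \ T 0, ξ ℓ t ^ 2
      = ∑ t ∈ T ℓ, ξ ℓ t ^ 2 := Finset.sum_inter_add_sum_sdiff _ _ _
  set Sℓ : ℝ := S ‖u ℓ - u 0‖ ‖z ℓ - z 0‖ with hSℓ
  have hSℓnn : 0 ≤ Sℓ := hSnonneg _ _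
  have hSℓle : Sℓ ≤ C0 := hSle ℓ
  -- bound the intersection part
  have h1 : ∑ t ∈ T ℓ ∩ T 0, ξ ℓ t ^ 2 ≤ (Real.sqrt E0 + C0) ^ 2 := by
    have hs := hstab 0 ℓ (Nat.zero_le ℓ)
    have hsub : ∑ t ∈ T ℓ ∩ T 0, ξ 0 t ^ 2 ≤ E0 :=
      Finset.sum_le_sum_of_subset_of_nonneg (Finset.inter_subset_right)
        (fun t _ _ => sq_nonneg _)
    have hsqrt : Real.sqrt (∑ t ∈ T ℓ ∩ T 0, ξ ℓ t ^ 2) ≤ Real.sqrt E0 + C0 :=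
      hs.trans (add_le_add (Real.sqrt_le_sqrt hsub) hSℓle)
    calc ∑ t ∈ T ℓ ∩ T 0, ξ ℓ t ^ 2
        = Real.sqrt (∑ t ∈ T ℓ ∩ T 0, ξ ℓ t ^ 2) ^ 2 := (Real.sq_sqrt (hsum_nn _ _)).symm
      _ ≤ (Real.sqrt E0 + C0) ^ 2 := by
          apply pow_le_pow_left₀ (Real.sqrt_nonneg _) hsqrt
  -- bound the difference part
  have h2 : ∑ t ∈ T ℓ \ T 0, ξ ℓ t ^ 2 ≤ E0 + C0 ^ 2 := by
    have hr := hred 0 ℓ (Nat.zero_le ℓ)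
    have hsub : ∑ t ∈ T 0 \ T ℓ, ξ 0 t ^ 2 ≤ E0 :=
      Finset.sum_le_sum_of_subset_of_nonneg (Finset.sdiff_subset)
        (fun t _ _ => sq_nonneg _)
    have hq' : q * ∑ t ∈ T 0 \ T ℓ, ξ 0 t ^ 2 ≤ E0 := by
      calc q * ∑ t ∈ T 0 \ T ℓ, ξ 0 t ^ 2 ≤ 1 * ∑ t ∈ T 0 \ T ℓ, ξ 0 t ^ 2 :=
            mul_le_mul_of_nonneg_right hq1.le (hsum_nn _ _)
        _ = ∑ t ∈ T 0 \ T ℓ, ξ 0 t ^ 2 := one_mul _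
        _ ≤ E0 := hsub
    have hS2 : Sℓ ^ 2 ≤ C0 ^ 2 := pow_le_pow_left₀ hSℓnn hSℓle 2
    exact hr.trans (add_le_add hq' hS2)
  have hfin : ∑ t ∈ T ℓ, ξ ℓ t ^ 2 ≤ M := by
    rw [← hsplit, hM]; exact add_le_add h1 h2
  exact Real.sqrt_le_sqrt hfin
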